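/- For all n ≥ 2, the matrix identity 2^n · F_3 = 4 · Σ_{l odd, 1 ≤ l ≤ n} (l-1) · C_l holds (equivalently, F_3 = (4/2^n) Σ_{l odd} (l-1) C_l, where the sum is over odd l between 1 and n). -/

import Mathlib

open Finset Matrix

noncomputable section

/-- Hamming weight of a basis label. -/
def hw {n : ℕ} (z : Fin n → Bool) : ℕ := (Finset.univ.filter fun i => z i = true).card

/-- The sign `(-1)^{z i}` of a bit. -/
def sgn (b : Bool) : ℂ := if b = true then -1 else 1

/-- The operator `C_l`: the diagonal matrix with entry
`∑_{S ⊆ Fin n, |S| = l} ∏_{i ∈ S} (-1)^{z i}`. -/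
def Cmat (n l : ℕ) : Matrix (Fin n → Bool) (Fin n → Bool) ℂ :=
  Matrix.diagonal fun z => ∑ S ∈ Finset.powersetCard l (Finset.univ : Finset (Fin n)),
    ∏ i ∈ S, sgn (z i)

/-- The projector `Π_m` onto the Hamming-weight-`m` sector. -/
def Pimat (n m : ℕ) : Matrix (Fin n → Bool) (Fin n → Bool) ℂ :=
  Matrix.diagonal fun z => if hw z = m then 1 else 0

/-- The operator `F_3 = (n-2)(Π_0 - Π_n) - (Π_1 - Π_{n-1})`. -/
def F3mat (n : ℕ) : Matrix (Fin n → Bool) (Fin n → Bool) ℂ :=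
  ((n : ℂ) - 2) • (Pimat n 0 - Pimat n n) - (Pimat n 1 - Pimat n (n-1))

lemma sgn_not (b : Bool) : sgn (!b) = - sgn b := by cases b <;> simp [sgn]

lemma prod_sgn_not {n : ℕ} (z : Fin n → Bool) (S : Finset (Fin n)) :
    ∏ i ∈ S, sgn (!z i) = (-1 : ℂ)^S.card * ∏ i ∈ S, sgn (z i) := by
  have : ∀ i ∈ S, sgn (!z i) = (-1) * sgn (z i) := fun i _ => by rw [sgn_not]; ring
  rw [Finset.prod_congr rfl this, Finset.prod_mul_distrib, Finset.prod_const]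

lemma prod_one_add_sgn {n : ℕ} (z : Fin n → Bool) (s : Finset (Fin n)) :
    ∏ i ∈ s, (sgn (z i) + 1) =
      if ∀ i ∈ s, z i = false then (2:ℂ)^s.card else 0 := by
  split_ifs with h
  · rw [← Finset.prod_const]
    exact Finset.prod_congr rfl fun i hi => by simp [sgn, h i hi]; norm_num
  · push_neg at h
    obtain ⟨i, hi, hz⟩ := h
    apply Finset.prod_eq_zero hi
    simp only [ne_eq, Bool.not_eq_false] at hz
    simp [sgn, hz]

lemma sum_powerset_prod {n : ℕ} (z : Fin n → Bool) :
    ∑ S ∈ (univ : Finset (Fin n)).powerset, ∏ i ∈ S, sgn (z i)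
      = ∏ i, (sgn (z i) + 1) := by
  rw [Finset.prod_add]
  simp

lemma sum_powerset_mem {n : ℕ} (z : Fin n → Bool) (j : Fin n) :
    ∑ S ∈ (univ : Finset (Fin n)).powerset, (if j ∈ S then ∏ i ∈ S, sgn (z i) else 0)
      = sgn (z j) * ∏ i ∈ univ.erase j, (sgn (z i) + 1) := by
  have hj : j ∉ (univ : Finset (Fin n)).erase j := notMem_erase j univ
  have huniv : insert j ((univ : Finset (Fin n)).erase j) = univ :=
    insert_erase (mem_univ j)
  rw [← huniv, Finset.sum_powerset_insert hj]
  have h1 : ∑ t ∈ ((univ : Finset (Fin n)).erase j).powerset,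
      (if j ∈ t then ∏ i ∈ t, sgn (z i) else 0) = 0 := by
    apply Finset.sum_eq_zero
    intro t ht
    rw [Finset.mem_powerset] at ht
    rw [if_neg (fun hjt => hj (ht hjt))]
  have h2 : ∀ t ∈ ((univ : Finset (Fin n)).erase j).powerset,
      (if j ∈ insert j t then ∏ i ∈ insert j t, sgn (z i) else 0)
        = sgn (z j) * ∏ i ∈ t, sgn (z i) := by
    intro t ht
    rw [Finset.mem_powerset] at ht
    rw [if_pos (mem_insert_self j t), Finset.prod_insert (fun hjt => hj (ht hjt))]
  rw [h1, Finset.sum_congr rfl h2, zero_add, ← Finset.mul_sum]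
  congr 1
  rw [Finset.prod_add]
  simp

lemma sum_card_prod {n : ℕ} (z : Fin n → Bool) :
    ∑ S ∈ (univ : Finset (Fin n)).powerset, (S.card : ℂ) * ∏ i ∈ S, sgn (z i)
      = ∑ j, sgn (z j) * ∏ i ∈ univ.erase j, (sgn (z i) + 1) := by
  have h : ∀ S ∈ (univ : Finset (Fin n)).powerset, (S.card : ℂ) * ∏ i ∈ S, sgn (z i)
      = ∑ j, (if j ∈ S then ∏ i ∈ S, sgn (z i) else 0) := by
    intro S _
    rw [Finset.sum_ite_mem, Finset.univ_inter, Finset.sum_const, nsmul_eq_mul]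
  rw [Finset.sum_congr rfl h, Finset.sum_comm]
  exact Finset.sum_congr rfl fun j _ => sum_powerset_mem z j

def Hv (n k : ℕ) : ℂ := if k = 0 then ((n:ℂ)-2)*2^(n-1) else if k = 1 then -(2^(n-1)) else 0

lemma hw_eq_zero_iff {n : ℕ} (z : Fin n → Bool) : hw z = 0 ↔ ∀ i, z i = false := by
  unfold hw
  rw [Finset.card_eq_zero, Finset.filter_eq_empty_iff]
  simp

lemma card_erase_univ {n : ℕ} (j : Fin n) : ((univ : Finset (Fin n)).erase j).card = n - 1 := by
  rw [Finset.card_erase_of_mem (mem_univ j), Finset.card_univ, Fintype.card_fin]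

lemma Hval {n : ℕ} (hn : 1 ≤ n) (z : Fin n → Bool) :
    ∑ S ∈ (univ : Finset (Fin n)).powerset, ((S.card : ℂ) - 1) * ∏ i ∈ S, sgn (z i)
      = Hv n (hw z) := by
  have hsplit : ∑ S ∈ (univ : Finset (Fin n)).powerset, ((S.card : ℂ) - 1) * ∏ i ∈ S, sgn (z i)
      = (∑ S ∈ (univ : Finset (Fin n)).powerset, (S.card : ℂ) * ∏ i ∈ S, sgn (z i))
        - ∑ S ∈ (univ : Finset (Fin n)).powerset, ∏ i ∈ S, sgn (z i) := by
    rw [← Finset.sum_sub_distrib]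
    exact Finset.sum_congr rfl fun S _ => by ring
  rw [hsplit, sum_card_prod, sum_powerset_prod]
  have hE : ∏ i, (sgn (z i) + 1) = if hw z = 0 then (2:ℂ)^n else 0 := by
    rw [prod_one_add_sgn]
    rw [Finset.card_univ, Fintype.card_fin]
    by_cases h : hw z = 0
    · rw [if_pos h, if_pos (by simpa using (hw_eq_zero_iff z).mp h)]
    · rw [if_neg h, if_neg]
      intro hall
      exact h ((hw_eq_zero_iff z).mpr fun i => hall i (mem_univ i))
  have hprodj : ∀ j : Fin n, ∏ i ∈ univ.erase j, (sgn (z i) + 1)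
      = if (∀ i, z i = true → i = j) then (2:ℂ)^(n-1) else 0 := by
    intro j
    rw [prod_one_add_sgn, card_erase_univ]
    congr 1
    simp only [eq_iff_iff]
    constructor
    · intro h i hi
      by_contra hij
      have := h i (Finset.mem_erase.mpr ⟨hij, mem_univ i⟩)
      rw [hi] at this; exact Bool.noConfusion this
    · intro h i hi
      rw [Finset.mem_erase] at hi
      cases hzi : z i with
      | false => rfl
      | true => exact absurd (h i hzi) hi.1
  rw [hE]
  by_cases h0 : hw z = 0
  · have hall := (hw_eq_zero_iff z).mp h0
    have : ∀ j : Fin n, sgn (z j) * ∏ i ∈ univ.erase j, (sgn (z i) + 1) = (2:ℂ)^(n-1) := by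
      intro j
      rw [hprodj, if_pos (fun i hi => absurd (hall i ▸ hi) Bool.noConfusion),
        hall j]
      simp [sgn]
    rw [Finset.sum_congr rfl (fun j _ => this j), Finset.sum_const, Finset.card_univ,
      Fintype.card_fin, nsmul_eq_mul, if_pos h0, Hv, if_pos h0]
    have h2 : (2:ℂ)^n = 2 * 2^(n-1) := by
      rw [← pow_succ']; congr 1; omega
    rw [h2]; ring
  · rw [if_neg h0, sub_zero]
    by_cases h1 : hw z = 1
    · obtain ⟨j0, hj0⟩ := Finset.card_eq_one.mp h1
      have hzj0 : z j0 = true := by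
        have : j0 ∈ univ.filter (fun i => z i = true) := hj0 ▸ Finset.mem_singleton_self j0
        exact (Finset.mem_filter.mp this).2
      have huniq : ∀ i, z i = true → i = j0 := by
        intro i hi
        have : i ∈ univ.filter (fun i => z i = true) := Finset.mem_filter.mpr ⟨mem_univ i, hi⟩
        rw [hj0] at this; exact Finset.mem_singleton.mp this
      rw [Hv, if_neg h0, if_pos h1]
      rw [Finset.sum_eq_single j0]
      · rw [hprodj, if_pos huniq, hzj0]
        simp [sgn]
      · intro j _ hj
        rw [hprodj, if_neg, mul_zero]
        intro h
        exact hj ((h j0 hzj0) ▸ rfl)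
      · intro h; exact absurd (mem_univ j0) h
    · have h2 : 2 ≤ hw z := by omega
      rw [Hv, if_neg h0, if_neg h1]
      apply Finset.sum_eq_zero
      intro j _
      obtain ⟨a, ha, b, hb, hab⟩ := Finset.one_lt_card.mp h2
      rw [Finset.mem_filter] at ha hb
      rw [hprodj, if_neg, mul_zero]
      intro h
      exact hab ((h a ha.2).trans (h b hb.2).symm)

lemma hw_not {n : ℕ} (z : Fin n → Bool) : hw (fun i => !z i) = n - hw z := by
  have := Finset.card_filter_add_card_filter_not
    (s := (univ : Finset (Fin n))) (p := fun i => z i = true)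
  simp only [Finset.card_univ, Fintype.card_fin] at this
  have he : hw (fun i => !z i) = (univ.filter fun i => ¬ z i = true).card := by
    unfold hw
    congr 1
    apply Finset.filter_congr
    intro i _
    simp
  unfold hw at *
  omega

lemma key (n k : ℕ) (hn : 2 ≤ n) (hk : k ≤ n) :
    (2:ℂ)^n * (((n:ℂ)-2) * ((if k = 0 then (1:ℂ) else 0) - (if k = n then 1 else 0))
      - ((if k = 1 then (1:ℂ) else 0) - (if k = n-1 then 1 else 0)))
      = 2 * (Hv n k - Hv n (n-k)) := by
  have h2 : (2:ℂ)^n = 2 * 2^(n-1) := by rw [← pow_succ']; congr 1; omega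
  unfold Hv
  split_ifs <;> first | omega | (rw [h2]; ring)

lemma entry (n : ℕ) (hn : 2 ≤ n) (z : Fin n → Bool) :
    (2:ℂ)^n * (((n:ℂ)-2) * ((if hw z = 0 then (1:ℂ) else 0) - (if hw z = n then 1 else 0))
      - ((if hw z = 1 then (1:ℂ) else 0) - (if hw z = n-1 then 1 else 0)))
      = 4 * ∑ l ∈ (Finset.range (n+1)).filter (fun l => Odd l),
          ((l:ℂ)-1) * ∑ S ∈ Finset.powersetCard l (univ : Finset (Fin n)),
            ∏ i ∈ S, sgn (z i) := by
  have hR : 4 * ∑ l ∈ (Finset.range (n+1)).filter (fun l => Odd l),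
      ((l:ℂ)-1) * ∑ S ∈ Finset.powersetCard l (univ : Finset (Fin n)), ∏ i ∈ S, sgn (z i)
      = ∑ l ∈ Finset.range (n+1), ∑ S ∈ Finset.powersetCard l (univ : Finset (Fin n)),
          (if Odd S.card then 4*((S.card:ℂ)-1) else 0) * ∏ i ∈ S, sgn (z i) := by
    rw [Finset.mul_sum, Finset.sum_filter]
    apply Finset.sum_congr rfl
    intro l _
    rw [Finset.mul_sum]
    by_cases hl : Odd l
    · rw [if_pos hl, Finset.mul_sum]
      apply Finset.sum_congr rfl
      intro S hS
      have hc : S.card = l := (Finset.mem_powersetCard.mp hS).2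
      rw [hc, if_pos hl]
      ring
    · rw [if_neg hl]
      symm
      apply Finset.sum_eq_zero
      intro S hS
      have hc : S.card = l := (Finset.mem_powersetCard.mp hS).2
      rw [hc, if_neg hl, zero_mul]
  have hP : ∑ l ∈ Finset.range (n+1), ∑ S ∈ Finset.powersetCard l (univ : Finset (Fin n)),
        (if Odd S.card then 4*((S.card:ℂ)-1) else 0) * ∏ i ∈ S, sgn (z i)
      = ∑ S ∈ (univ : Finset (Fin n)).powerset,
        (if Odd S.card then 4*((S.card:ℂ)-1) else 0) * ∏ i ∈ S, sgn (z i) := by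
    rw [Finset.sum_powerset]
    congr 1
    rw [Finset.card_univ, Fintype.card_fin]
  have hsplit : ∀ S : Finset (Fin n),
      (if Odd S.card then 4*((S.card:ℂ)-1) else 0) * ∏ i ∈ S, sgn (z i)
      = 2 * (((S.card:ℂ)-1) * ∏ i ∈ S, sgn (z i))
        - 2 * (((S.card:ℂ)-1) * ∏ i ∈ S, sgn (!z i)) := by
    intro S
    rw [prod_sgn_not]
    rcases Nat.even_or_odd S.card with he | ho
    · rw [if_neg (by simpa using he), he.neg_one_pow]
      ring
    · rw [if_pos ho, ho.neg_one_pow]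
      ring
  have hsum : ∑ S ∈ (univ : Finset (Fin n)).powerset,
        (if Odd S.card then 4*((S.card:ℂ)-1) else 0) * ∏ i ∈ S, sgn (z i)
      = 2 * (Hv n (hw z) - Hv n (n - hw z)) := by
    rw [Finset.sum_congr rfl (fun S _ => hsplit S), Finset.sum_sub_distrib,
      ← Finset.mul_sum, ← Finset.mul_sum, Hval (by omega) z,
      Hval (by omega) (fun i => !z i), hw_not]
    ring
  rw [hR, hP, hsum]
  exact key n (hw z) hn (by
    have : (univ.filter fun i => z i = true).card ≤ (univ : Finset (Fin n)).card :=
      Finset.card_filter_le _ _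
    simpa [Finset.card_univ, hw] using this)

/-- `2^n · F_3 = 4 · ∑_{l odd, 1 ≤ l ≤ n} (l-1) C_l`. -/
theorem stmt6 (n : ℕ) (hn : 2 ≤ n) :
    (2^n : ℂ) • F3mat n
      = (4 : ℂ) • ∑ l ∈ (Finset.range (n+1)).filter (fun l => Odd l),
          ((l : ℂ) - 1) • Cmat n l := by
  ext z w
  by_cases hzw : z = w
  · subst hzw
    simp only [Matrix.smul_apply, F3mat, Pimat, Cmat, Matrix.sub_apply,
      Matrix.diagonal_apply_eq, Matrix.sum_apply, smul_eq_mul]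
    exact entry n hn z
  · simp [F3mat, Pimat, Cmat, Matrix.diagonal_apply_ne _ hzw, Matrix.sum_apply]
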